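/- If two agents' positions x_i, x_j : ℝ → ℝ² are differentiable, ‖x_i(0)−x_j(0)‖² ≥ R², and at every t ≥ 0 their velocities satisfy the decentralized responsibility-weighted constraints −2(x_i−x_j)ᵀẋ_i ≤ ω_i·γ·(‖x_i−x_j‖²−R²) and −2(x_j−x_i)ᵀẋ_j ≤ ω_j·γ·(‖x_i−x_j‖²−R²) with ω_i+ω_j = 1 and γ ≥ 0, then ‖x_i(t)−x_j(t)‖ ≥ R for all t ≥ 0. -/

import Mathlib

theorem decentralized_cbf_safety
    (xi xj : ℝ → EuclideanSpace ℝ (Fin 2))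
    (hdi : Differentiable ℝ xi) (hdj : Differentiable ℝ xj)
    (R γ ωi ωj : ℝ) (hR : 0 ≤ R) (hγ : 0 ≤ γ)
    (hωi : 0 ≤ ωi) (hωj : 0 ≤ ωj) (hω : ωi + ωj = 1)
    (h0 : ‖xi 0 - xj 0‖ ^ 2 ≥ R ^ 2)
    (hci : ∀ t, 0 ≤ t →
      -2 * (inner ℝ (xi t - xj t) (deriv xi t) : ℝ) ≤
        ωi * γ * (‖xi t - xj t‖ ^ 2 - R ^ 2))
    (hcj : ∀ t, 0 ≤ t →
      -2 * (inner ℝ (xj t - xi t) (deriv xj t) : ℝ) ≤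
        ωj * γ * (‖xi t - xj t‖ ^ 2 - R ^ 2)) :
    ∀ t, 0 ≤ t → R ≤ ‖xi t - xj t‖ := by
  -- h t = ‖xi t - xj t‖^2 - R^2, g t = h t * exp (γ t)
  set d : ℝ → EuclideanSpace ℝ (Fin 2) := fun t => xi t - xj t with hdDef
  have hdd : Differentiable ℝ d := hdi.sub hdj
  set g : ℝ → ℝ := fun t => (‖d t‖ ^ 2 - R ^ 2) * Real.exp (γ * t) with hgDef
  have hgd : ∀ t : ℝ, HasDerivAt g
      (((inner ℝ (d t) (deriv xi t - deriv xj t) : ℝ) +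
        (inner ℝ (deriv xi t - deriv xj t) (d t) : ℝ)) * Real.exp (γ * t)
        + (‖d t‖ ^ 2 - R ^ 2) * (γ * Real.exp (γ * t))) t := by
    intro t
    have hdd' : HasDerivAt d (deriv xi t - deriv xj t) t :=
      ((hdi t).hasDerivAt.sub (hdj t).hasDerivAt)
    have hinner : HasDerivAt (fun t => (inner ℝ (d t) (d t) : ℝ))
        ((inner ℝ (d t) (deriv xi t - deriv xj t) : ℝ) +
         (inner ℝ (deriv xi t - deriv xj t) (d t) : ℝ)) t :=
      hdd'.inner ℝ hdd'
    have hsq : HasDerivAt (fun t => ‖d t‖ ^ 2 - R ^ 2)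
        ((inner ℝ (d t) (deriv xi t - deriv xj t) : ℝ) +
         (inner ℝ (deriv xi t - deriv xj t) (d t) : ℝ)) t := by
      have heq : (fun t => (inner ℝ (d t) (d t) : ℝ) - R ^ 2)
          = fun t => ‖d t‖ ^ 2 - R ^ 2 :=
        funext fun t => by rw [real_inner_self_eq_norm_sq]
      exact heq ▸ (hinner.sub_const (R ^ 2))
    have hexp : HasDerivAt (fun t : ℝ => Real.exp (γ * t)) (γ * Real.exp (γ * t)) t := by
      have := (Real.hasDerivAt_exp (γ * t)).comp t ((hasDerivAt_id t).const_mul γ)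
      simpa [mul_comm, Function.comp_def] using this
    exact hsq.mul hexp
  have hmono : MonotoneOn g (Set.Ici (0:ℝ)) := by
    apply monotoneOn_of_deriv_nonneg (convex_Ici 0)
    · exact (Continuous.continuousOn (continuous_iff_continuousAt.2 fun t => (hgd t).continuousAt))
    · intro t ht
      exact ((hgd t).differentiableAt).differentiableWithinAt
    · intro t ht
      simp only [interior_Ici, Set.mem_Ioi] at ht
      rw [(hgd t).deriv]
      have h1 := hci t ht.le
      have h2 := hcj t ht.le
      have hji : (inner ℝ (xj t - xi t) (deriv xj t) : ℝ)
          = -(inner ℝ (d t) (deriv xj t) : ℝ) := by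
        rw [show xj t - xi t = -(d t) from (neg_sub _ _).symm, inner_neg_left]
      have e1 : (inner ℝ (d t) (deriv xi t - deriv xj t) : ℝ)
          = (inner ℝ (d t) (deriv xi t) : ℝ) - (inner ℝ (d t) (deriv xj t) : ℝ) :=
        inner_sub_right _ _ _
      have e2 : (inner ℝ (deriv xi t - deriv xj t) (d t) : ℝ)
          = (inner ℝ (d t) (deriv xi t) : ℝ) - (inner ℝ (d t) (deriv xj t) : ℝ) := by
        rw [real_inner_comm]; exact e1
      have hn : ‖d t‖ ^ 2 = ‖xi t - xj t‖ ^ 2 := rfl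
      have hd1 : (inner ℝ (d t) (deriv xi t) : ℝ) = (inner ℝ (xi t - xj t) (deriv xi t) : ℝ) := rfl
      have hsum : -((inner ℝ (d t) (deriv xi t - deriv xj t) : ℝ) +
          (inner ℝ (deriv xi t - deriv xj t) (d t) : ℝ)) ≤ γ * (‖d t‖ ^ 2 - R ^ 2) := by
        have key : ωi * γ * (‖xi t - xj t‖ ^ 2 - R ^ 2)
            + ωj * γ * (‖xi t - xj t‖ ^ 2 - R ^ 2)
            = γ * (‖xi t - xj t‖ ^ 2 - R ^ 2) := by
          linear_combination (γ * (‖xi t - xj t‖ ^ 2 - R ^ 2)) * hω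
        rw [e1, e2, hn, hd1]
        linarith [h1, h2, hji, key]
      have hexp_pos : 0 < Real.exp (γ * t) := Real.exp_pos _
      nlinarith [hexp_pos]
  intro t ht
  have hg0 : g 0 ≤ g t := hmono (Set.self_mem_Ici) ht ht
  have h0' : 0 ≤ g 0 := by
    simp only [hgDef, hdDef, mul_zero, Real.exp_zero, mul_one]
    linarith
  have hgt : 0 ≤ g t := le_trans h0' hg0
  have hexp_pos : 0 < Real.exp (γ * t) := Real.exp_pos _
  have hsq : R ^ 2 ≤ ‖d t‖ ^ 2 := by
    by_contra hc
    push_neg at hc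
    have : g t < 0 := mul_neg_of_neg_of_pos (by linarith) hexp_pos
    linarith
  nlinarith [norm_nonneg (d t), hsq]
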